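/- Jackson's q-tangent symmetry: with sin_q(z) = sum_{n≥0} (-1)^n z^(2n+1)/[2n+1]_q! and cos_q(z) = sum_{n≥0} (-1)^n z^(2n)/[2n]_q! over Q(q), one has sin_q(z)·cos_{1/q}(z) - sin_{1/q}(z)·cos_q(z) = 0 as formal power series in z. -/

import Mathlib

noncomputable section
open Finset PowerSeries

abbrev Fq : Type := RatFunc ℚ

/-- The variable `q` as element of the field of rational functions `ℚ(q)`. -/
def qv : Fq := RatFunc.X

/-- The q-integer `[m]_q = 1 + q + ... + q^(m-1)`. -/
def qInt (x : Fq) (m : ℕ) : Fq := ∑ i ∈ Finset.range m, x ^ i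

/-- The q-factorial `[m]_q! = [1]_q [2]_q ⋯ [m]_q`. -/
def qFact (x : Fq) (m : ℕ) : Fq := ∏ i ∈ Finset.range m, qInt x (i + 1)

/-- Jackson's `sin_q(z) = ∑ (-1)^n z^(2n+1)/[2n+1]_q!`. -/
def qsin (x : Fq) : PowerSeries Fq :=
  PowerSeries.mk fun m => if m % 2 = 1 then (-1 : Fq) ^ (m / 2) / qFact x m else 0

/-- Jackson's `cos_q(z) = ∑ (-1)^n z^(2n)/[2n]_q!`. -/
def qcos (x : Fq) : PowerSeries Fq :=
  PowerSeries.mk fun m => if m % 2 = 0 then (-1 : Fq) ^ (m / 2) / qFact x m else 0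

lemma qv_ne_zero : qv ≠ 0 := RatFunc.X_ne_zero

lemma qInt_qv_ne_zero (m : ℕ) : qInt qv (m + 1) ≠ 0 := by
  have h : qInt qv (m + 1)
      = algebraMap (Polynomial ℚ) Fq (∑ i ∈ Finset.range (m + 1), Polynomial.X ^ i) := by
    rw [qInt, map_sum]
    exact Finset.sum_congr rfl fun i _ => by rw [map_pow]; rfl
  rw [h]
  apply RatFunc.algebraMap_ne_zero
  intro hc
  have := congrArg (Polynomial.eval 0) hc
  simp [Polynomial.eval_finset_sum, Finset.sum_range_succ'] at this

lemma qFact_qv_ne_zero (m : ℕ) : qFact qv m ≠ 0 := by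
  rw [qFact]
  exact Finset.prod_ne_zero_iff.mpr fun i _ => qInt_qv_ne_zero i

lemma qFact_succ (x : Fq) (m : ℕ) : qFact x (m + 1) = qFact x m * qInt x (m + 1) := by
  rw [qFact, Finset.prod_range_succ, ← qFact]

lemma qInt_inv (m : ℕ) : qInt qv⁻¹ (m + 1) = (qv ^ m)⁻¹ * qInt qv (m + 1) := by
  rw [qInt, qInt, Finset.mul_sum,
    ← Finset.sum_range_reflect (fun j => (qv ^ m)⁻¹ * qv ^ j) (m + 1)]
  apply Finset.sum_congr rfl
  intro i hi
  rw [Finset.mem_range] at hi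
  have hi' : m + 1 - 1 - i = m - i := by omega
  simp only [hi']
  rw [pow_sub₀ qv qv_ne_zero (by omega), inv_pow,
    inv_mul_cancel_left₀ (pow_ne_zero _ qv_ne_zero)]

lemma qFact_inv (m : ℕ) : qFact qv⁻¹ m = (qv ^ m.choose 2)⁻¹ * qFact qv m := by
  induction m with
  | zero => simp [qFact]
  | succ n ih =>
    rw [qFact_succ, qFact_succ, ih, qInt_inv,
      Nat.choose_succ_succ, Nat.choose_one_right, pow_add, mul_inv]
    ring

lemma qInt_add (a b : ℕ) : qInt qv (a + b) = qInt qv a + qv ^ a * qInt qv b := by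
  rw [qInt, qInt, qInt, Finset.sum_range_add, Finset.mul_sum]
  congr 1
  exact Finset.sum_congr rfl fun i _ => pow_add qv a i

/-- The alternating sum `∑_{a+b=N} (-1)^a q^(C(b,2)) / ([a]_q! [b]_q!)`. -/
def Gsum (N : ℕ) : Fq :=
  ∑ p ∈ Finset.HasAntidiagonal.antidiagonal N,
    (-1 : Fq) ^ p.1 * qv ^ p.2.choose 2 / (qFact qv p.1 * qFact qv p.2)

lemma Gsum_rec (M : ℕ) : qInt qv (M + 1) * Gsum (M + 1) = (qv ^ M - 1) * Gsum M := by
  have key : qInt qv (M + 1) * Gsum (M + 1) =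
      (∑ p ∈ Finset.HasAntidiagonal.antidiagonal (M + 1),
        (-1 : Fq) ^ p.1 * qv ^ p.2.choose 2 * qInt qv p.1 / (qFact qv p.1 * qFact qv p.2))
      + (∑ p ∈ Finset.HasAntidiagonal.antidiagonal (M + 1),
        (-1 : Fq) ^ p.1 * (qv ^ p.1 * qv ^ p.2.choose 2) * qInt qv p.2
          / (qFact qv p.1 * qFact qv p.2)) := by
    rw [Gsum, Finset.mul_sum, ← Finset.sum_add_distrib]
    apply Finset.sum_congr rfl
    intro p hp
    rw [Finset.HasAntidiagonal.mem_antidiagonal] at hp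
    rw [← hp, qInt_add]
    field_simp
  have hS1 : (∑ p ∈ Finset.HasAntidiagonal.antidiagonal (M + 1),
      (-1 : Fq) ^ p.1 * qv ^ p.2.choose 2 * qInt qv p.1 / (qFact qv p.1 * qFact qv p.2))
      = - Gsum M := by
    rw [Finset.Nat.sum_antidiagonal_succ]
    have h0 : (-1 : Fq) ^ (0:ℕ) * qv ^ (M+1).choose 2 * qInt qv 0
        / (qFact qv 0 * qFact qv (M+1)) = 0 := by
      simp [qInt]
    rw [h0, zero_add, Gsum, ← Finset.sum_neg_distrib]
    apply Finset.sum_congr rfl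
    intro p hp
    rw [qFact_succ]
    have h1 := qFact_qv_ne_zero p.1
    have h2 := qFact_qv_ne_zero p.2
    have h3 := qInt_qv_ne_zero p.1
    field_simp
    ring
  have hS2 : (∑ p ∈ Finset.HasAntidiagonal.antidiagonal (M + 1),
      (-1 : Fq) ^ p.1 * (qv ^ p.1 * qv ^ p.2.choose 2) * qInt qv p.2
        / (qFact qv p.1 * qFact qv p.2))
      = qv ^ M * Gsum M := by
    rw [Finset.Nat.sum_antidiagonal_succ']
    have h0 : (-1 : Fq) ^ (M+1) * (qv ^ (M+1) * qv ^ (0:ℕ).choose 2) * qInt qv 0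
        / (qFact qv (M+1) * qFact qv 0) = 0 := by
      simp [qInt]
    rw [h0, zero_add, Gsum, Finset.mul_sum]
    apply Finset.sum_congr rfl
    intro p hp
    rw [Finset.HasAntidiagonal.mem_antidiagonal] at hp
    have he : (p.2 + 1).choose 2 = p.2.choose 2 + p.2 := by
      rw [Nat.choose_succ_succ, Nat.choose_one_right]; exact Nat.add_comm _ _
    rw [he, qFact_succ]
    have h1 := qFact_qv_ne_zero p.1
    have h2 := qFact_qv_ne_zero p.2
    have h3 := qInt_qv_ne_zero p.2
    have hqv : qv ^ p.1 * qv ^ (p.2.choose 2 + p.2) = qv ^ M * qv ^ p.2.choose 2 := by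
      rw [← pow_add, ← pow_add]
      congr 1
      omega
    rw [hqv]
    field_simp
  rw [key, hS1, hS2]
  ring

lemma Gsum_eq_zero (N : ℕ) : Gsum (N + 1) = 0 := by
  induction N with
  | zero =>
    have h := Gsum_rec 0
    have h1 : qInt qv 1 = 1 := by simp [qInt]
    rw [h1, one_mul] at h
    simpa using h
  | succ n ih =>
    have h := Gsum_rec (n + 1)
    rw [ih, mul_zero] at h
    exact (mul_eq_zero.mp h).resolve_left (qInt_qv_ne_zero (n + 1))

theorem jackson_q_tangent_symmetry :
    qsin qv * qcos qv⁻¹ - qsin qv⁻¹ * qcos qv = 0 := by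
  ext N
  rw [map_sub, PowerSeries.coeff_mul, PowerSeries.coeff_mul, map_zero]
  have hswap : ∑ p ∈ Finset.HasAntidiagonal.antidiagonal N,
        (coeff p.1) (qsin qv⁻¹) * (coeff p.2) (qcos qv)
      = ∑ p ∈ Finset.HasAntidiagonal.antidiagonal N,
        (coeff p.2) (qsin qv⁻¹) * (coeff p.1) (qcos qv) := by
    conv_lhs => rw [← Finset.HasAntidiagonal.map_swap_antidiagonal]
    simp only [Finset.sum_map, Function.Embedding.coeFn_mk, Prod.fst_swap, Prod.snd_swap]
  rw [hswap, ← Finset.sum_sub_distrib]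
  rcases Nat.even_or_odd N with hN | hN
  · apply Finset.sum_eq_zero
    intro p hp
    rw [Finset.HasAntidiagonal.mem_antidiagonal] at hp
    obtain ⟨t, ht⟩ := hN
    rcases Nat.mod_two_eq_zero_or_one p.1 with h1 | h1
    · have h2 : p.2 % 2 = 0 := by omega
      simp [qsin, qcos, coeff_mk, h1, h2]
    · have h2 : p.2 % 2 = 1 := by omega
      simp [qsin, qcos, coeff_mk, h1, h2]
  · obtain ⟨K, hK⟩ := hN
    have hmain : ∑ p ∈ Finset.HasAntidiagonal.antidiagonal N,
        ((coeff p.1) (qsin qv) * (coeff p.2) (qcos qv⁻¹)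
          - (coeff p.2) (qsin qv⁻¹) * (coeff p.1) (qcos qv))
        = (-1 : Fq) ^ (K + 1) * Gsum N := by
      rw [Gsum, Finset.mul_sum]
      apply Finset.sum_congr rfl
      intro p hp
      rw [Finset.HasAntidiagonal.mem_antidiagonal] at hp
      have h1 := qFact_qv_ne_zero p.1
      have h2 := qFact_qv_ne_zero p.2
      have hq := qv_ne_zero
      have hqp : (qv : Fq) ^ p.2.choose 2 ≠ 0 := pow_ne_zero _ qv_ne_zero
      rcases Nat.mod_two_eq_zero_or_one p.1 with ho | ho
      · -- p.1 even, p.2 odd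
        have he : p.2 % 2 = 1 := by omega
        have hA : (-1 : Fq) ^ (p.2 / 2) * (-1 : Fq) ^ (p.1 / 2) = (-1 : Fq) ^ K := by
          rw [← pow_add]; congr 1; omega
        have hB : (-1 : Fq) ^ p.1 = 1 := Even.neg_one_pow (Nat.even_iff.mpr ho)
        simp only [qsin, qcos, coeff_mk, ho, he, if_true, if_false, one_ne_zero, zero_ne_one,
          reduceIte]
        rw [qFact_inv, hB, pow_succ, ← hA]
        field_simp
        ring
      · -- p.1 odd, p.2 even
        have he : p.2 % 2 = 0 := by omega
        have hA : (-1 : Fq) ^ (p.1 / 2) * (-1 : Fq) ^ (p.2 / 2) = (-1 : Fq) ^ K := by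
          rw [← pow_add]; congr 1; omega
        have hB : (-1 : Fq) ^ p.1 = -1 := Odd.neg_one_pow (Nat.odd_iff.mpr ho)
        simp only [qsin, qcos, coeff_mk, ho, he, if_true, if_false, one_ne_zero, zero_ne_one,
          reduceIte]
        rw [qFact_inv, hB, pow_succ, ← hA]
        field_simp
        ring
    rw [hmain, hK, Gsum_eq_zero, mul_zero]
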